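/- Let H be a real Hilbert space, A : D(A) ⊆ H → H self-adjoint with finite negative signature, and let V₁, …, V_{m} ∈ D(A) and continuous linear functionals φ₁, …, φ_m on H satisfy: the matrix C with entries C_{ij} = −⟨V_j, A V_i⟩ is invertible, φ_i(V_j) = C_{ij} up to sign conventions making H = Span(V₁,…,V_m) ⊕ T, where T = ⋂_i ker φ_i, and ⟨U, A V_i⟩ = 0 for all U ∈ T and each i. Then neg(A) = neg(A|_T) + neg(−C), where neg denotes negative signature of the associated quadratic forms. -/

import Mathlib

open scoped RealInnerProductSpace
open Matrix

/-- `n` is the negative signature of the quadratic form `f`: the maximal dimension of a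
subspace on which `f` is negative definite. -/
def IsNegSig {V : Type*} [AddCommGroup V] [Module ℝ V] (f : V → ℝ) (n : ℕ) : Prop :=
  (∃ W : Submodule ℝ V, Module.finrank ℝ W = n ∧ ∀ v ∈ W, v ≠ 0 → f v < 0) ∧
  ∀ m : ℕ, (∃ W : Submodule ℝ V, Module.finrank ℝ W = m ∧ ∀ v ∈ W, v ≠ 0 → f v < 0) → m ≤ n

open Module

section Aux

variable {E F : Type*} [AddCommGroup E] [Module ℝ E] [AddCommGroup F] [Module ℝ F]

lemma IsNegSig.unique {f : E → ℝ} {a b : ℕ} (ha : IsNegSig f a) (hb : IsNegSig f b) : a = b :=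
  le_antisymm (hb.2 a ha.1) (ha.2 b hb.1)

lemma exists_fd_neg (f : E → ℝ) (W : Submodule ℝ E) {n : ℕ}
    (hWr : finrank ℝ W = n) (hneg : ∀ v ∈ W, v ≠ 0 → f v < 0) :
    ∃ W' : Submodule ℝ E, FiniteDimensional ℝ W' ∧ finrank ℝ W' = n ∧
      ∀ v ∈ W', v ≠ 0 → f v < 0 := by
  by_cases h : FiniteDimensional ℝ W
  · exact ⟨W, h, hWr, hneg⟩
  · have hrank : (n : Cardinal) ≤ Module.rank ℝ W := by
      have h' : ¬ Module.rank ℝ W < Cardinal.aleph0 := by rwa [rank_lt_aleph0_iff]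
      exact le_trans (Cardinal.nat_lt_aleph0 n).le (not_lt.mp h')
    obtain ⟨s, hcard, hli⟩ := le_rank_iff_exists_linearIndependent_finset.mp hrank
    refine ⟨(Submodule.span ℝ (s : Set W)).map W.subtype, ?_, ?_, ?_⟩
    · infer_instance
    · rw [Submodule.finrank_map_subtype_eq, finrank_span_finset_eq_card hli, hcard]
    · intro v hv hv0
      exact hneg v (Submodule.map_subtype_le _ _ hv) hv0

lemma IsNegSig.comp_equiv {f : F → ℝ} {n : ℕ} (h : IsNegSig f n) (e : E ≃ₗ[ℝ] F) :
    IsNegSig (fun v : E => f (e v)) n := by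
  obtain ⟨⟨W₀, hW₀r, hW₀neg⟩, hmax⟩ := h
  constructor
  · refine ⟨W₀.map (e.symm : F →ₗ[ℝ] E), ?_, ?_⟩
    · rw [LinearEquiv.finrank_map_eq]; exact hW₀r
    · rintro v ⟨w, hw, rfl⟩ hv
      have h1 : e ((e.symm : F →ₗ[ℝ] E) w) = w := e.apply_symm_apply w
      dsimp only
      rw [h1]
      refine hW₀neg w hw fun hw0 => hv ?_
      simp [hw0]
  · rintro k ⟨W₁, hW₁r, hW₁neg⟩
    refine hmax k ⟨W₁.map (e : E →ₗ[ℝ] F), ?_, ?_⟩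
    · rw [LinearEquiv.finrank_map_eq]; exact hW₁r
    · rintro v ⟨w, hw, rfl⟩ hv
      exact hW₁neg w hw fun hw0 => hv (by simp [hw0])

lemma bilin_sum_sum {ι : Type*} [Fintype ι] (b : LinearMap.BilinForm ℝ E) (c d : ι → ℝ)
    (v w : ι → E) :
    b (∑ i, c i • v i) (∑ j, d j • w j) = ∑ i, ∑ j, c i * d j * b (v i) (w j) := by
  calc b (∑ i, c i • v i) (∑ j, d j • w j)
      = ∑ j, d j * b (∑ i, c i • v i) (w j) := by
        rw [map_sum]; exact Finset.sum_congr rfl fun j _ => by rw [_root_.map_smul, smul_eq_mul]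
    _ = ∑ j, ∑ i, d j * (c i * b (v i) (w j)) := by
        refine Finset.sum_congr rfl fun j _ => ?_
        rw [map_sum, LinearMap.sum_apply, Finset.mul_sum]
        refine Finset.sum_congr rfl fun i _ => ?_
        rw [_root_.map_smul, LinearMap.smul_apply, smul_eq_mul]
    _ = ∑ i, ∑ j, c i * d j * b (v i) (w j) := by
        rw [Finset.sum_comm]
        exact Finset.sum_congr rfl fun i _ =>
          Finset.sum_congr rfl fun j _ => by ring

lemma bilin_diag_sum {N : ℕ} (β : LinearMap.BilinForm ℝ E) (e : Basis (Fin N) ℝ E)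
    (he : β.IsOrthoᵢ e) (w : E) :
    β w w = ∑ i, (e.repr w i)^2 * β (e i) (e i) := by
  conv_lhs => rw [← e.sum_repr w]
  rw [bilin_sum_sum]
  refine Finset.sum_congr rfl fun i _ => ?_
  rw [Finset.sum_eq_single i]
  · ring
  · intro j _ hj
    have h0 : β (e i) (e j) = 0 := he (Ne.symm hj)
    rw [h0, mul_zero]
  · intro hi; exact absurd (Finset.mem_univ i) hi

end Aux

section Core

variable {E : Type*} [AddCommGroup E] [Module ℝ E]

lemma fd_neg_bound (b : LinearMap.BilinForm ℝ E) (hsymm : ∀ x y, b x y = b y x)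
    (V₁ V₂ : Submodule ℝ E) (hc : IsCompl V₁ V₂)
    (horth : ∀ x ∈ V₁, ∀ y ∈ V₂, b x y = 0)
    {n₁ n₂ : ℕ}
    (hmax₁ : ∀ k : ℕ, (∃ W : Submodule ℝ V₁, finrank ℝ W = k ∧
      ∀ v ∈ W, v ≠ 0 → b (v : E) (v : E) < 0) → k ≤ n₁)
    (hmax₂ : ∀ k : ℕ, (∃ W : Submodule ℝ V₂, finrank ℝ W = k ∧
      ∀ v ∈ W, v ≠ 0 → b (v : E) (v : E) < 0) → k ≤ n₂)
    (W : Submodule ℝ E) [FiniteDimensional ℝ W]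
    (hWneg : ∀ v ∈ W, v ≠ 0 → b v v < 0) :
    finrank ℝ W ≤ n₁ + n₂ := by
  classical
  set g₁ : W →ₗ[ℝ] V₁ := (V₁.linearProjOfIsCompl V₂ hc) ∘ₗ W.subtype with hg₁
  set g₂ : W →ₗ[ℝ] V₂ := (V₂.linearProjOfIsCompl V₁ hc.symm) ∘ₗ W.subtype with hg₂
  have hdecomp : ∀ w : W, ((g₁ w : E) + (g₂ w : E)) = (w : E) := fun w =>
    Submodule.projection_add_projection_eq_self hc (w : E)
  set β₁ : LinearMap.BilinForm ℝ W :=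
    b.compl₁₂ (V₁.subtype ∘ₗ g₁) (V₁.subtype ∘ₗ g₁) with hβ₁def
  set β₂ : LinearMap.BilinForm ℝ W :=
    b.compl₁₂ (V₂.subtype ∘ₗ g₂) (V₂.subtype ∘ₗ g₂) with hβ₂def
  have hβ₁ : ∀ w w' : W, β₁ w w' = b (g₁ w : E) (g₁ w' : E) := fun _ _ => rfl
  have hβ₂ : ∀ w w' : W, β₂ w w' = b (g₂ w : E) (g₂ w' : E) := fun _ _ => rfl
  have hsum : ∀ w w' : W, b (w : E) (w' : E) = β₁ w w' + β₂ w w' := by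
    intro w w'
    rw [hβ₁, hβ₂, ← hdecomp w, ← hdecomp w']
    simp only [map_add, LinearMap.add_apply]
    rw [horth _ (g₁ w).2 _ (g₂ w').2, hsymm ((g₂ w : E)) ((g₁ w') : E),
        horth _ (g₁ w').2 _ (g₂ w).2]
    ring
  have β₁symm : LinearMap.IsSymm β₁ := by
    refine ⟨fun x y => ?_⟩
    simp only [RingHom.id_apply]
    rw [hβ₁, hβ₁, hsymm]
  obtain ⟨e, he⟩ := LinearMap.BilinForm.exists_orthogonal_basis β₁symm
  set S : Finset (Fin (finrank ℝ W)) :=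
    Finset.univ.filter (fun i => β₁ (e i) (e i) < 0) with hS
  -- negativity of β₁ on span of S-part
  have hWneg₁ : ∀ w ∈ Submodule.span ℝ (e '' (S : Set (Fin (finrank ℝ W)))),
      w ≠ 0 → β₁ w w < 0 := by
    intro w hw hw0
    have hsupp : ↑(e.repr w).support ⊆ (S : Set (Fin (finrank ℝ W))) :=
      e.mem_span_image.mp hw
    have hrepr : e.repr w ≠ 0 := fun h => hw0 (by
      have := congrArg e.repr.symm h
      simpa using this)
    obtain ⟨i, hi⟩ := Finsupp.ne_iff.mp hrepr
    rw [bilin_diag_sum β₁ e he w]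
    have hle : ∀ j ∈ Finset.univ, (e.repr w j)^2 * β₁ (e j) (e j) ≤ (0 : ℝ) := by
      intro j _
      by_cases hj : j ∈ S
      · have hd : β₁ (e j) (e j) < 0 := by
          have := Finset.mem_filter.mp hj
          exact this.2
        exact mul_nonpos_of_nonneg_of_nonpos (sq_nonneg _) hd.le
      · have hz : e.repr w j = 0 := by
          by_contra hz
          exact hj (hsupp (Finsupp.mem_support_iff.mpr hz))
        rw [hz]; ring_nf; simp
    have hstrict : ∃ j ∈ Finset.univ, (e.repr w j)^2 * β₁ (e j) (e j) < (0 : ℝ) := by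
      refine ⟨i, Finset.mem_univ _, ?_⟩
      have hiS : i ∈ S := hsupp (Finsupp.mem_support_iff.mpr (by simpa using hi))
      have hd : β₁ (e i) (e i) < 0 := (Finset.mem_filter.mp hiS).2
      have hne : e.repr w i ≠ 0 := by simpa using hi
      have hp : (0:ℝ) < (e.repr w i)^2 :=
        lt_of_le_of_ne (sq_nonneg _) (Ne.symm (pow_ne_zero 2 hne))
      exact mul_neg_of_pos_of_neg hp hd
    obtain ⟨j, hjmem, hjlt⟩ := hstrict
    calc ∑ i, (e.repr w i)^2 * β₁ (e i) (e i)
        < ∑ _i : Fin (finrank ℝ W), (0:ℝ) :=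
          Finset.sum_lt_sum hle ⟨j, hjmem, hjlt⟩
      _ = 0 := by simp
  -- nonnegativity of β₁ on span of complement part
  have hWpos₁ : ∀ w ∈ Submodule.span ℝ (e '' ((Sᶜ : Finset _) : Set (Fin (finrank ℝ W)))),
      (0:ℝ) ≤ β₁ w w := by
    intro w hw
    have hsupp : ↑(e.repr w).support ⊆ ((Sᶜ : Finset _) : Set (Fin (finrank ℝ W))) :=
      e.mem_span_image.mp hw
    rw [bilin_diag_sum β₁ e he w]
    refine Finset.sum_nonneg fun j _ => ?_
    by_cases hj : j ∈ S
    · have hz : e.repr w j = 0 := by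
        by_contra hz
        have := hsupp (Finsupp.mem_support_iff.mpr hz)
        simp only [Finset.coe_compl, Set.mem_compl_iff, Finset.mem_coe] at this
        exact this hj
      rw [hz]; ring_nf; simp
    · have hd : ¬ β₁ (e j) (e j) < 0 := by
        intro hd
        exact hj (Finset.mem_filter.mpr ⟨Finset.mem_univ _, hd⟩)
      exact mul_nonneg (sq_nonneg _) (not_lt.mp hd)
  -- the span of a subset of the basis has finrank = card
  have hspanrank : ∀ s : Finset (Fin (finrank ℝ W)),
      finrank ℝ (Submodule.span ℝ (e '' (s : Set (Fin (finrank ℝ W))))) = s.card := by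
    intro s
    have hli : LinearIndependent ℝ (fun i : (s : Set (Fin (finrank ℝ W))) => e i) :=
      e.linearIndependent.comp _ Subtype.val_injective
    rw [Set.image_eq_range, finrank_span_eq_card hli]
    simp
  -- bound 1
  have hb1 : S.card ≤ n₁ := by
    set Wneg := Submodule.span ℝ (e '' (S : Set (Fin (finrank ℝ W)))) with hWnegdef
    set j₁ : Wneg →ₗ[ℝ] V₁ := g₁ ∘ₗ Wneg.subtype with hj₁
    have hinj : Function.Injective j₁ := by
      rw [← LinearMap.ker_eq_bot, LinearMap.ker_eq_bot']
      intro x hx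
      by_contra hx0
      have hxW : (x : W) ≠ 0 := fun h => hx0 (Subtype.ext h)
      have hneg := hWneg₁ (x : W) x.2 hxW
      rw [hβ₁] at hneg
      have hgx : g₁ (x : W) = 0 := hx
      rw [hgx] at hneg
      simp at hneg
    refine hmax₁ S.card ⟨LinearMap.range j₁, ?_, ?_⟩
    · rw [LinearMap.finrank_range_of_inj hinj, hspanrank]
    · rintro v ⟨x, rfl⟩ hv0
      have hxW : (x : W) ≠ 0 := by
        intro h
        apply hv0
        have : x = 0 := Subtype.ext h
        rw [this, map_zero]
      have hneg := hWneg₁ (x : W) x.2 hxW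
      rw [hβ₁] at hneg
      exact hneg
  -- bound 2
  have hb2 : Sᶜ.card ≤ n₂ := by
    set Wpos := Submodule.span ℝ (e '' ((Sᶜ : Finset _) : Set (Fin (finrank ℝ W)))) with hWposdef
    have hWpos₂ : ∀ w : W, w ∈ Wpos → w ≠ 0 → β₂ w w < 0 := by
      intro w hw hw0
      have h1 := hWpos₁ w hw
      have h2 : b (w : E) (w : E) < 0 := by
        refine hWneg (w : E) w.2 ?_
        exact fun h => hw0 (Subtype.ext h)
      have h3 := hsum w w
      linarith
    set j₂ : Wpos →ₗ[ℝ] V₂ := g₂ ∘ₗ Wpos.subtype with hj₂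
    have hinj : Function.Injective j₂ := by
      rw [← LinearMap.ker_eq_bot, LinearMap.ker_eq_bot']
      intro x hx
      by_contra hx0
      have hxW : (x : W) ≠ 0 := fun h => hx0 (Subtype.ext h)
      have hneg := hWpos₂ (x : W) x.2 hxW
      rw [hβ₂] at hneg
      have hgx : g₂ (x : W) = 0 := hx
      rw [hgx] at hneg
      simp at hneg
    refine hmax₂ Sᶜ.card ⟨LinearMap.range j₂, ?_, ?_⟩
    · rw [LinearMap.finrank_range_of_inj hinj, hspanrank]
    · rintro v ⟨x, rfl⟩ hv0
      have hxW : (x : W) ≠ 0 := by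
        intro h
        apply hv0
        have : x = 0 := Subtype.ext h
        rw [this, map_zero]
      have hneg := hWpos₂ (x : W) x.2 hxW
      rw [hβ₂] at hneg
      exact hneg
  calc finrank ℝ W = Fintype.card (Fin (finrank ℝ W)) := by simp
    _ = S.card + Sᶜ.card := (Finset.card_add_card_compl S).symm
    _ ≤ n₁ + n₂ := Nat.add_le_add hb1 hb2

end Core

lemma negsig_add {E : Type*} [AddCommGroup E] [Module ℝ E]
    (b : LinearMap.BilinForm ℝ E) (hsymm : ∀ x y, b x y = b y x)
    (V₁ V₂ : Submodule ℝ E) (hc : IsCompl V₁ V₂)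
    (horth : ∀ x ∈ V₁, ∀ y ∈ V₂, b x y = 0)
    {n₁ n₂ : ℕ}
    (h₁ : IsNegSig (fun u : V₁ => b (u : E) (u : E)) n₁)
    (h₂ : IsNegSig (fun u : V₂ => b (u : E) (u : E)) n₂) :
    IsNegSig (fun v : E => b v v) (n₁ + n₂) := by
  constructor
  · obtain ⟨⟨W₁0, hr₁0, hneg₁0⟩, _⟩ := h₁
    obtain ⟨⟨W₂0, hr₂0, hneg₂0⟩, _⟩ := h₂
    obtain ⟨W₁, hfd₁, hr₁, hneg₁⟩ := exists_fd_neg _ W₁0 hr₁0 hneg₁0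
    obtain ⟨W₂, hfd₂, hr₂, hneg₂⟩ := exists_fd_neg _ W₂0 hr₂0 hneg₂0
    set W₁' := W₁.map V₁.subtype with hW₁'
    set W₂' := W₂.map V₂.subtype with hW₂'
    haveI : FiniteDimensional ℝ W₁' := Module.Finite.map W₁ V₁.subtype
    haveI : FiniteDimensional ℝ W₂' := Module.Finite.map W₂ V₂.subtype
    have hle₁ : W₁' ≤ V₁ := Submodule.map_subtype_le _ _
    have hle₂ : W₂' ≤ V₂ := Submodule.map_subtype_le _ _
    have hneg₁' : ∀ x ∈ W₁', x ≠ 0 → b x x < 0 := by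
      rintro x ⟨x', hx', rfl⟩ hx0
      have : x' ≠ 0 := fun h => hx0 (by rw [h]; rfl)
      exact hneg₁ x' hx' this
    have hneg₂' : ∀ x ∈ W₂', x ≠ 0 → b x x < 0 := by
      rintro x ⟨x', hx', rfl⟩ hx0
      have : x' ≠ 0 := fun h => hx0 (by rw [h]; rfl)
      exact hneg₂ x' hx' this
    have hinf : W₁' ⊓ W₂' = ⊥ := by
      rw [eq_bot_iff]
      calc W₁' ⊓ W₂' ≤ V₁ ⊓ V₂ := inf_le_inf hle₁ hle₂
        _ = ⊥ := hc.inf_eq_bot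
    refine ⟨W₁' ⊔ W₂', ?_, ?_⟩
    · have := Submodule.finrank_sup_add_finrank_inf_eq W₁' W₂'
      rw [hinf] at this
      simp only [finrank_bot, add_zero] at this
      rw [this, Submodule.finrank_map_subtype_eq, Submodule.finrank_map_subtype_eq, hr₁, hr₂]
    · intro v hv hv0
      obtain ⟨x, hx, y, hy, rfl⟩ := Submodule.mem_sup.mp hv
      have hcross : b x y = 0 := horth x (hle₁ hx) y (hle₂ hy)
      have hcross' : b y x = 0 := by rw [hsymm]; exact hcross
      have hexp : b (x + y) (x + y) = b x x + b y y := by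
        simp only [map_add, LinearMap.add_apply]
        rw [hcross, hcross']; ring
      have hxle : b x x ≤ 0 := by
        by_cases hx0 : x = 0
        · simp [hx0]
        · exact (hneg₁' x hx hx0).le
      have hyle : b y y ≤ 0 := by
        by_cases hy0 : y = 0
        · simp [hy0]
        · exact (hneg₂' y hy hy0).le
      have hor : x ≠ 0 ∨ y ≠ 0 := by
        by_contra hno
        push_neg at hno
        exact hv0 (by rw [hno.1, hno.2, add_zero])
      dsimp only
      rw [hexp]
      rcases hor with hx0 | hy0
      · have := hneg₁' x hx hx0; linarith
      · have := hneg₂' y hy hy0; linarith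
  · rintro k ⟨W, hWr, hWneg⟩
    obtain ⟨W', hfd, hr', hneg'⟩ := exists_fd_neg _ W hWr hWneg
    rw [← hr']
    exact fd_neg_bound b hsymm V₁ V₂ hc horth
      (fun k hk => h₁.2 k hk) (fun k hk => h₂.2 k hk) W' hneg'

/-- abstract Pogan–Scheel–Zumbrun index lemma. With `A` self-adjoint,
directions `V i`, constraint functionals `φ i` with `T = ⋂ ker φ i`, Gram matrix
`C i j = −⟨V j, A V i⟩` invertible, `φ i (V j) = C i j`, `H = span(V) ⊕ T`, and `T`
`A`-orthogonal to the `V i`, one has `neg(A) = neg(A|_T) + neg(−C)`. -/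
theorem psz_signature_additivity
    {H : Type*} [NormedAddCommGroup H] [InnerProductSpace ℝ H] [CompleteSpace H]
    {m : ℕ}
    (A : H →L[ℝ] H) (hA : IsSelfAdjoint A)
    (V : Fin m → H) (φ : Fin m → (H →L[ℝ] ℝ))
    (C : Matrix (Fin m) (Fin m) ℝ)
    (hC : ∀ i j, C i j = - ⟪V j, A (V i)⟫)
    (hCinv : IsUnit C.det)
    (T : Submodule ℝ H) (hT : T = ⨅ i, LinearMap.ker (φ i : H →ₗ[ℝ] ℝ))
    (hφV : ∀ i j, φ i (V j) = C i j)
    (hsplit : IsCompl (Submodule.span ℝ (Set.range V)) T)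
    (horth : ∀ U ∈ T, ∀ i, ⟪U, A (V i)⟫ = 0) :
    ∀ n nT nC : ℕ,
      IsNegSig (fun U : H => ⟪A U, U⟫) n →
      IsNegSig (fun U : T => ⟪A U.1, U.1⟫) nT →
      IsNegSig (fun x : Fin m → ℝ => x ⬝ᵥ (-C).mulVec x) nC →
      n = nT + nC := by
  intro n nT nC hn hnT hnC
  -- the bilinear form
  set bF : LinearMap.BilinForm ℝ H := LinearMap.mk₂ ℝ (fun x y => ⟪A x, y⟫)
    (fun x x' y => by simp [inner_add_left])
    (fun c x y => by simp [real_inner_smul_left])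
    (fun x y y' => by simp [inner_add_right])
    (fun c x y => by simp [real_inner_smul_right]) with hbF
  have hbapp : ∀ x y, bF x y = ⟪A x, y⟫ := fun _ _ => rfl
  have hsymm : ∀ x y, bF x y = bF y x := by
    intro x y
    rw [hbapp, hbapp]
    rw [show ⟪A x, y⟫ = ⟪x, A y⟫ from hA.isSymmetric x y, real_inner_comm]
  -- linear independence of V
  have hli : LinearIndependent ℝ V := by
    rw [Fintype.linearIndependent_iff]
    intro g hg
    have hmul : C *ᵥ g = 0 := by
      funext j
      have h0 := congrArg (φ j) hg
      simp only [map_sum, _root_.map_smul, smul_eq_mul, map_zero] at h0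
      have h1 : ∑ i, g i * C j i = 0 := by
        rw [← h0]
        exact Finset.sum_congr rfl fun i _ => by rw [hφV]
      simpa [Matrix.mulVec, dotProduct, mul_comm] using h1
    have hinj : Function.Injective C.mulVec :=
      Matrix.mulVec_injective_iff_isUnit.mpr ((Matrix.isUnit_iff_isUnit_det C).mpr hCinv)
    have hg0 : g = 0 := hinj (by rw [hmul, Matrix.mulVec_zero])
    intro i; rw [hg0]; rfl
  set Sp := Submodule.span ℝ (Set.range V) with hSp
  have hbV : ∀ i j, bF (V i) (V j) = -(C i j) := by
    intro i j
    rw [hbapp, real_inner_comm, hC i j, neg_neg]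
  -- orthogonality of span and T
  have horth' : ∀ x ∈ Sp, ∀ y ∈ T, bF x y = 0 := by
    intro x hx y hy
    induction hx using Submodule.span_induction with
    | mem x hx =>
      obtain ⟨i, rfl⟩ := hx
      rw [hbapp, real_inner_comm]
      exact horth y hy i
    | zero => simp
    | add x z hx hz ihx ihz => rw [map_add, LinearMap.add_apply, ihx, ihz, add_zero]
    | smul c x hx ih => rw [_root_.map_smul, LinearMap.smul_apply, ih, smul_zero]
  -- negative signature on the span
  have hSpSig : IsNegSig (fun u : Sp => bF (u : H) (u : H)) nC := by
    set bs : Basis (Fin m) ℝ Sp := Basis.span hli with hbs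
    have h1 : IsNegSig (fun u : Sp => (bs.equivFun u) ⬝ᵥ (-C).mulVec (bs.equivFun u)) nC :=
      hnC.comp_equiv bs.equivFun
    have h2 : (fun u : Sp => (bs.equivFun u) ⬝ᵥ (-C).mulVec (bs.equivFun u))
        = fun u : Sp => bF (u : H) (u : H) := by
      funext u
      set c : Fin m → ℝ := bs.equivFun u with hc
      have hu : (u : H) = ∑ i, c i • V i := by
        have h3 : u = bs.equivFun.symm c := (bs.equivFun.symm_apply_apply u).symm
        have h4 : bs.equivFun.symm c = ∑ i, c i • bs i := bs.equivFun_symm_apply c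
        rw [h3, h4]
        push_cast
        refine Finset.sum_congr rfl fun i _ => ?_
        rw [Basis.span_apply]
      show c ⬝ᵥ (-C).mulVec c = bF (u : H) (u : H)
      calc c ⬝ᵥ (-C).mulVec c = ∑ i, ∑ j, c i * c j * -(C i j) := by
            simp only [dotProduct, Matrix.mulVec, Matrix.neg_apply, Finset.mul_sum]
            refine Finset.sum_congr rfl fun i _ => Finset.sum_congr rfl fun j _ => by ring
        _ = ∑ i, ∑ j, c i * c j * bF (V i) (V j) := by
            refine Finset.sum_congr rfl fun i _ => Finset.sum_congr rfl fun j _ => ?_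
            rw [hbV]
        _ = bF (u : H) (u : H) := by rw [hu, bilin_sum_sum]
    rw [← h2]
    exact h1
  have hTSig : IsNegSig (fun u : T => bF (u : H) (u : H)) nT := hnT
  have hadd := negsig_add bF hsymm Sp T hsplit horth' hSpSig hTSig
  have : n = nC + nT := IsNegSig.unique hn hadd
  omega
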